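/- In the real/complex cone setup, for any h ∈ B_ℂ and any z ∈ ℂ with |z| < (√2 ‖h‖)^{−1}, one has 𝕖 + zh ∈ 𝒞_ℂ and δ_𝒞(𝕖, 𝕖 + zh) ≤ ln( (1 + |z|√2‖h‖) / (1 − |z|√2‖h‖) ) < ∞. -/

import Mathlib

open Complex Set ENNReal

namespace ConeSetup

variable {B : Type*} [NormedAddCommGroup B] [NormedSpace ℝ B]

/-- Complex scalar multiplication on the complexification `B × B`:
`(a+ib)(x,y) = (ax − by, ay + bx)`. -/
def cSmul (z : ℂ) (p : B × B) : B × B :=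
  (z.re • p.1 - z.im • p.2, z.re • p.2 + z.im • p.1)

/-- The "real" norm `‖(x,y)‖_r = √(‖x‖² + ‖y‖²)` on the complexification. -/
noncomputable def rNorm (p : B × B) : ℝ :=
  Real.sqrt (‖p.1‖ ^ 2 + ‖p.2‖ ^ 2)

/-- The complexification norm `‖(x,y)‖ = sup_{θ∈[0,2π]} ‖e^{iθ}(x,y)‖_r`. -/
noncomputable def cNorm (p : B × B) : ℝ :=
  sSup ((fun θ : ℝ => rNorm (cSmul (Complex.exp (θ * Complex.I)) p)) ''
    Set.Icc 0 (2 * Real.pi))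

/-- The real cone `𝒞_ℝ = {h ≠ 0 : ℓ(h) ≥ 0 for all ℓ ∈ S}`. -/
def realCone (S : Set (B →L[ℝ] ℝ)) : Set B :=
  {h | h ≠ 0 ∧ ∀ ℓ ∈ S, 0 ≤ ℓ h}

/-- The complex cone `𝒞_ℂ = ℂ_* ⋅ (𝒞_ℝ + i 𝒞_ℝ)`. -/
def complexCone (S : Set (B →L[ℝ] ℝ)) : Set (B × B) :=
  {p | ∃ z : ℂ, z ≠ 0 ∧ ∃ x ∈ realCone S, ∃ y ∈ realCone S, p = cSmul z (x, y)}

/-- A map `B × B → ℂ` is a (continuous) complex-linear functional for the complex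
structure `cSmul`. -/
def IsCLinearFunctional (ℓ : B × B → ℂ) : Prop :=
  (∀ p q : B × B, ℓ (p + q) = ℓ p + ℓ q) ∧
  (∀ (z : ℂ) (p : B × B), ℓ (cSmul z p) = z * ℓ p) ∧
  Continuous ℓ

/-- The dual real cone `𝒞'_ℝ = {ℓ ∈ B'_ℝ : ℓ(h) ≥ 0 for all h ∈ 𝒞_ℝ}`. -/
def dualRealCone (S : Set (B →L[ℝ] ℝ)) : Set (B →L[ℝ] ℝ) :=
  {ℓ | ∀ h ∈ realCone S, 0 ≤ ℓ h}

/-- The dual complex cone `𝒞'_ℂ = {ℓ ∈ B'_ℂ : ℓ(h) ≠ 0 for all h ∈ 𝒞_ℂ}`. -/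
def dualComplexCone (S : Set (B →L[ℝ] ℝ)) : Set (B × B → ℂ) :=
  {ℓ | IsCLinearFunctional ℓ ∧ ∀ h ∈ complexCone S, ℓ h ≠ 0}

/-- The action of a real functional on the complexification: `ℓ(x+iy) = ℓ(x) + iℓ(y)`. -/
noncomputable def cext (ℓ : B →L[ℝ] ℝ) (p : B × B) : ℂ :=
  (ℓ p.1 : ℂ) + (ℓ p.2 : ℂ) * Complex.I

/-- `𝒞̊'_ℝ = {ℓ ∈ 𝒞'_ℝ : ℓ(x) > 0 for all x ∈ 𝒞_ℝ}`. -/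
def interiorDualRealCone (S : Set (B →L[ℝ] ℝ)) : Set (B →L[ℝ] ℝ) :=
  {ℓ | ℓ ∈ dualRealCone S ∧ ∀ x ∈ realCone S, 0 < ℓ x}

/-- `Ĉ'_ℂ = {±ℓ ± ip : ℓ, p ∈ 𝒞̊'_ℝ}`. -/
def hatDualComplexCone (S : Set (B →L[ℝ] ℝ)) : Set (B × B → ℂ) :=
  {q | ∃ ℓ ∈ interiorDualRealCone S, ∃ p ∈ interiorDualRealCone S,
    ∃ ε₁ ∈ ({1, -1} : Set ℝ), ∃ ε₂ ∈ ({1, -1} : Set ℝ),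
      q = fun v => (ε₁ : ℂ) * cext ℓ v + (ε₂ : ℂ) * Complex.I * cext p v}

/-- `E_𝒞(h,g) = {ℓ(h)/ℓ(g) : ℓ ∈ 𝒞'_ℂ}`. -/
def gaugeSet (S : Set (B →L[ℝ] ℝ)) (h g : B × B) : Set ℂ :=
  {z | ∃ ℓ ∈ dualComplexCone S, z = ℓ h / ℓ g}

/-- The projective gauge
`δ_𝒞(h,g) = ln( sup_{z∈E_𝒞(h,g)} |z| / inf_{z∈E_𝒞(h,g)} |z| ) = sup_{z,w∈E_𝒞(h,g)} ln|z/w|`,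
valued in `[0,∞]`. -/
noncomputable def deltaGauge (S : Set (B →L[ℝ] ℝ)) (h g : B × B) : ℝ≥0∞ :=
  ⨆ z ∈ gaugeSet S h g, ⨆ w ∈ gaugeSet S h g, ENNReal.ofReal (Real.log (‖z‖ / ‖w‖))

/-- The real/complex cone setup: a separating family `S` of functionals, an order unit `𝕖`
whose cone norm is the norm of `B`, and a functional `𝕞` in the weak-* closed convex hull
of `ℝ₊ ⋅ S` dominating the norm on the cone. -/
structure Setup (B : Type*) [NormedAddCommGroup B] [NormedSpace ℝ B] where
  S : Set (B →L[ℝ] ℝ)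
  e : B
  mm : B →L[ℝ] ℝ
  κ : ℝ
  separating : ∀ x : B, (∀ ℓ ∈ S, ℓ x = 0) → x = 0
  e_mem : e ∈ realCone S
  arch : ∀ h : B, ∃ l : ℝ, 0 ≤ l ∧ ∀ ℓ ∈ S, 0 ≤ ℓ (l • e - h)
  norm_eq : ∀ h : B,
    ‖h‖ = sInf {l : ℝ | 0 ≤ l ∧ ∀ ℓ ∈ S, 0 ≤ ℓ (l • e - h) ∧ 0 ≤ ℓ (l • e + h)}
  κ_pos : 0 < κ
  κ_lt_one : κ < 1
  mm_e : mm e = 1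
  mm_lower : ∀ h ∈ realCone S, κ * ‖h‖ ≤ mm h
  mm_star : (⇑mm : B → ℝ) ∈ closure ((fun ℓ : B →L[ℝ] ℝ => (⇑ℓ : B → ℝ)) ''
    convexHull ℝ {q : B →L[ℝ] ℝ | ∃ c : ℝ, 0 ≤ c ∧ ∃ ℓ ∈ S, q = c • ℓ})

-- aux lemmas to test
lemma cSmul_one (p : B × B) : cSmul 1 p = p := by simp [cSmul]

lemma cSmul_mul (z w : ℂ) (p : B × B) : cSmul (z * w) p = cSmul z (cSmul w p) := by
  unfold cSmul
  rw [Prod.ext_iff]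
  constructor <;> · simp only [Complex.mul_re, Complex.mul_im]; module

lemma rNorm_nonneg (p : B × B) : 0 ≤ rNorm p := Real.sqrt_nonneg _

lemma rNorm_real_smul (r : ℝ) (hr : 0 ≤ r) (p : B × B) :
    rNorm (cSmul (r : ℂ) p) = r * rNorm p := by
  have h : cSmul (r : ℂ) p = (r • p.1, r • p.2) := by unfold cSmul; simp
  rw [h]
  unfold rNorm
  simp only [norm_smul, Real.norm_eq_abs, _root_.abs_of_nonneg hr, mul_pow]
  rw [← mul_add, Real.sqrt_mul (by positivity), Real.sqrt_sq hr]

lemma rNorm_cSmul_bdd (ζ : ℂ) (p : B × B) (h1 : |ζ.re| ≤ 1) (h2 : |ζ.im| ≤ 1) :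
    rNorm (cSmul ζ p) ≤ Real.sqrt 2 * (‖p.1‖ + ‖p.2‖) := by
  have b1 : ‖ζ.re • p.1 - ζ.im • p.2‖ ≤ ‖p.1‖ + ‖p.2‖ := by
    calc ‖ζ.re • p.1 - ζ.im • p.2‖ ≤ ‖ζ.re • p.1‖ + ‖ζ.im • p.2‖ := norm_sub_le _ _
    _ ≤ ‖p.1‖ + ‖p.2‖ := by
        simp only [norm_smul, Real.norm_eq_abs]
        gcongr
        · exact mul_le_of_le_one_left (norm_nonneg _) h1
        · exact mul_le_of_le_one_left (norm_nonneg _) h2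
  have b2 : ‖ζ.re • p.2 + ζ.im • p.1‖ ≤ ‖p.1‖ + ‖p.2‖ := by
    calc ‖ζ.re • p.2 + ζ.im • p.1‖ ≤ ‖ζ.re • p.2‖ + ‖ζ.im • p.1‖ := norm_add_le _ _
    _ ≤ ‖p.1‖ + ‖p.2‖ := by
        simp only [norm_smul, Real.norm_eq_abs]
        rw [add_comm]
        gcongr
        · exact mul_le_of_le_one_left (norm_nonneg _) h2
        · exact mul_le_of_le_one_left (norm_nonneg _) h1
  have hM : (0:ℝ) ≤ ‖p.1‖ + ‖p.2‖ := by positivity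
  unfold rNorm cSmul
  calc Real.sqrt (‖ζ.re • p.1 - ζ.im • p.2‖ ^ 2 + ‖ζ.re • p.2 + ζ.im • p.1‖ ^ 2)
      ≤ Real.sqrt (2 * (‖p.1‖ + ‖p.2‖) ^ 2) := by
        apply Real.sqrt_le_sqrt
        nlinarith [norm_nonneg (ζ.re • p.1 - ζ.im • p.2), norm_nonneg (ζ.re • p.2 + ζ.im • p.1)]
    _ = Real.sqrt 2 * (‖p.1‖ + ‖p.2‖) := by
        rw [Real.sqrt_mul (by norm_num), Real.sqrt_sq hM]

lemma cNorm_bdd (p : B × B) : BddAbove ((fun θ : ℝ =>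
    rNorm (cSmul (Complex.exp (θ * Complex.I)) p)) '' Set.Icc 0 (2 * Real.pi)) := by
  refine ⟨Real.sqrt 2 * (‖p.1‖ + ‖p.2‖), ?_⟩
  rintro x ⟨θ, hθ, rfl⟩
  have habs : ‖Complex.exp (θ * Complex.I)‖ = 1 := by
    simpa using Complex.norm_exp_ofReal_mul_I θ
  exact rNorm_cSmul_bdd _ p
    (by simpa [habs] using Complex.abs_re_le_norm (Complex.exp (θ * Complex.I)))
    (by simpa [habs] using Complex.abs_im_le_norm (Complex.exp (θ * Complex.I)))

lemma rNorm_exp_le_cNorm (p : B × B) (θ : ℝ) (hθ : θ ∈ Set.Icc 0 (2 * Real.pi)) :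
    rNorm (cSmul (Complex.exp (θ * Complex.I)) p) ≤ cNorm p :=
  le_csSup (cNorm_bdd p) ⟨θ, hθ, rfl⟩

lemma cNorm_nonneg (p : B × B) : 0 ≤ cNorm p := by
  have h1 := rNorm_exp_le_cNorm p 0 ⟨le_refl 0, by positivity⟩
  have h2 := rNorm_nonneg (cSmul (Complex.exp ((0:ℝ) * Complex.I)) p)
  linarith

lemma rNorm_cSmul_le (z : ℂ) (p : B × B) : rNorm (cSmul z p) ≤ ‖z‖ * cNorm p := by
  rcases eq_or_ne z 0 with rfl | hz
  · simp [cSmul, rNorm]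
  · set θ : ℝ := if z.arg < 0 then z.arg + 2 * Real.pi else z.arg with hθdef
    have hexp : Complex.exp ((θ:ℝ) * Complex.I) = Complex.exp (z.arg * Complex.I) := by
      rw [hθdef]
      by_cases h : z.arg < 0
      · rw [if_pos h]
        push_cast
        rw [add_mul, Complex.exp_add]
        simp [Complex.exp_two_pi_mul_I]
      · rw [if_neg h]
    have hpi := Real.pi_pos
    have ha1 := Complex.arg_le_pi z
    have ha2 := Complex.neg_pi_lt_arg z
    have hθmem : θ ∈ Set.Icc 0 (2 * Real.pi) := by
      rw [hθdef]
      by_cases h : z.arg < 0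
      · rw [if_pos h]; constructor <;> linarith
      · rw [if_neg h]; push_neg at h; constructor <;> linarith
    have hz' : z = ((‖z‖ : ℝ) : ℂ) * Complex.exp ((θ:ℝ) * Complex.I) := by
      rw [hexp, Complex.norm_mul_exp_arg_mul_I]
    calc rNorm (cSmul z p)
        = ‖z‖ * rNorm (cSmul (Complex.exp ((θ:ℝ) * Complex.I)) p) := by
          conv_lhs => rw [hz', cSmul_mul]
          exact rNorm_real_smul _ (norm_nonneg z) _
      _ ≤ ‖z‖ * cNorm p :=
          mul_le_mul_of_nonneg_left (rNorm_exp_le_cNorm p θ hθmem) (norm_nonneg z)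
      _ = ‖z‖ * cNorm p := rfl

lemma sum_norm_le_rNorm (p : B × B) : ‖p.1‖ + ‖p.2‖ ≤ Real.sqrt 2 * rNorm p := by
  unfold rNorm
  rw [← Real.sqrt_mul (by norm_num : (0:ℝ) ≤ 2)]
  rw [show ‖p.1‖ + ‖p.2‖ = Real.sqrt ((‖p.1‖ + ‖p.2‖) ^ 2) from
    (Real.sqrt_sq (by positivity)).symm]
  exact Real.sqrt_le_sqrt (by nlinarith [sq_nonneg (‖p.1‖ - ‖p.2‖)])

lemma affine_bound (c d : ℂ) (a : ℝ) (ha : 0 ≤ a)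
    (h : ∀ w : ℂ, ‖w‖ * a < 1 → c + w * d ≠ 0) : ‖d‖ ≤ a * ‖c‖ := by
  have hc : c ≠ 0 := by simpa using h 0 (by simp)
  rcases eq_or_ne d 0 with rfl | hd
  · simpa using mul_nonneg ha (norm_nonneg c)
  · by_contra hlt
    push_neg at hlt
    refine h (-(c / d)) ?_ ?_
    · rw [norm_neg, norm_div, div_mul_eq_mul_div, div_lt_one (norm_pos_iff.2 hd)]
      linarith [mul_comm ‖c‖ a]
    · field_simp
      ring

lemma nonneg_of_forall_eps (x c : ℝ) (hc : 0 ≤ c) (h : ∀ ε > 0, 0 ≤ x + ε * c) :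
    0 ≤ x := by
  refine le_of_forall_pos_le_add fun δ hδ => ?_
  have hε : 0 < δ / (c + 1) := by positivity
  have h1 := h _ hε
  have h2 : δ / (c + 1) * c ≤ δ := by
    rw [div_mul_eq_mul_div, div_le_iff₀ (by linarith)]
    nlinarith
  linarith

lemma norm_key (st : Setup B) (g : B) (ℓ : B →L[ℝ] ℝ) (hℓ : ℓ ∈ st.S) :
    0 ≤ ℓ (‖g‖ • st.e - g) ∧ 0 ≤ ℓ (‖g‖ • st.e + g) := by
  set T : Set ℝ :=
    {l : ℝ | 0 ≤ l ∧ ∀ m ∈ st.S, 0 ≤ m (l • st.e - g) ∧ 0 ≤ m (l • st.e + g)} with hT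
  have he : ∀ m ∈ st.S, (0:ℝ) ≤ m st.e := st.e_mem.2
  have hnormg : ‖g‖ = sInf T := st.norm_eq g
  -- T is nonempty
  obtain ⟨l₁, hl₁0, hl₁⟩ := st.arch g
  obtain ⟨l₂, hl₂0, hl₂⟩ := st.arch (-g)
  have hne : (max l₁ l₂) ∈ T := by
    refine ⟨le_trans hl₁0 (le_max_left _ _), fun m hm => ?_⟩
    have e1 := hl₁ m hm
    have e2 := hl₂ m hm
    have hm1 : m ((max l₁ l₂) • st.e - g) = m (l₁ • st.e - g) + (max l₁ l₂ - l₁) * m st.e := by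
      simp only [map_add, map_sub, map_neg, map_smul, smul_eq_mul]
      ring
    have hm2 : m ((max l₁ l₂) • st.e + g) = m (l₂ • st.e - (-g)) + (max l₁ l₂ - l₂) * m st.e := by
      simp only [map_add, map_sub, map_neg, map_smul, smul_eq_mul]
      ring
    have q1 := mul_nonneg (sub_nonneg.2 (le_max_left l₁ l₂)) (he m hm)
    have q2 := mul_nonneg (sub_nonneg.2 (le_max_right l₁ l₂)) (he m hm)
    exact ⟨by rw [hm1]; linarith, by rw [hm2]; linarith⟩
  have hbdd : BddBelow T := ⟨0, fun l hl => hl.1⟩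
  -- for every ε > 0
  have hstep : ∀ ε > 0, 0 ≤ ℓ (‖g‖ • st.e - g) + ε * ℓ st.e ∧
      0 ≤ ℓ (‖g‖ • st.e + g) + ε * ℓ st.e := by
    intro ε hε
    have hlt : sInf T < sInf T + ε := lt_add_of_pos_right _ hε
    obtain ⟨l, hlT, hllt⟩ := (csInf_lt_iff hbdd ⟨_, hne⟩).1 hlt
    obtain ⟨hl0, hl⟩ := hlT
    obtain ⟨p1, p2⟩ := hl ℓ hℓ
    have hle : l ≤ ‖g‖ + ε := by rw [hnormg]; linarith
    have q := mul_nonneg (sub_nonneg.2 hle) (he ℓ hℓ)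
    have r1 : ℓ ((‖g‖ + ε) • st.e - g) = ℓ (l • st.e - g) + (‖g‖ + ε - l) * ℓ st.e := by
      simp only [map_add, map_sub, map_neg, map_smul, smul_eq_mul]; ring
    have r2 : ℓ ((‖g‖ + ε) • st.e + g) = ℓ (l • st.e + g) + (‖g‖ + ε - l) * ℓ st.e := by
      simp only [map_add, map_sub, map_neg, map_smul, smul_eq_mul]; ring
    have s1 : ℓ ((‖g‖ + ε) • st.e - g) = ℓ (‖g‖ • st.e - g) + ε * ℓ st.e := by
      simp only [map_add, map_sub, map_neg, map_smul, smul_eq_mul]; ring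
    have s2 : ℓ ((‖g‖ + ε) • st.e + g) = ℓ (‖g‖ • st.e + g) + ε * ℓ st.e := by
      simp only [map_add, map_sub, map_neg, map_smul, smul_eq_mul]; ring
    constructor <;> nlinarith
  constructor
  · exact nonneg_of_forall_eps _ _ (he ℓ hℓ) fun ε hε => (hstep ε hε).1
  · exact nonneg_of_forall_eps _ _ (he ℓ hℓ) fun ε hε => (hstep ε hε).2

lemma add_mem_realCone (st : Setup B) (g : B) (hg : ‖g‖ < 1) :
    st.e + g ∈ realCone st.S := by
  constructor
  · intro h0
    have hge : g = -st.e := eq_neg_of_add_eq_zero_right h0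
    subst hge
    rw [norm_neg] at hg
    by_cases hall : ∀ m ∈ st.S, m st.e = 0
    · exact st.e_mem.1 (st.separating st.e hall)
    · push_neg at hall
      obtain ⟨m, hm, hmne⟩ := hall
      have hpos : 0 < m st.e := lt_of_le_of_ne (st.e_mem.2 m hm) (Ne.symm hmne)
      have h1 := (norm_key st (-st.e) m hm).2
      rw [norm_neg] at h1
      have h2 : m (‖st.e‖ • st.e + -st.e) = (‖st.e‖ - 1) * m st.e := by
        simp only [map_add, map_sub, map_neg, map_smul, smul_eq_mul]; ring
      rw [h2] at h1
      nlinarith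
  · intro ℓ hℓ
    have h1 := (norm_key st g ℓ hℓ).2
    have h2 := st.e_mem.2 ℓ hℓ
    have h3 : ℓ (st.e + g) = ℓ (‖g‖ • st.e + g) + (1 - ‖g‖) * ℓ st.e := by
      simp only [map_add, map_sub, map_neg, map_smul, smul_eq_mul]; ring
    nlinarith

lemma smul_mem_realCone {S : Set (B →L[ℝ] ℝ)} (c : ℝ) (hc : 0 < c) {x : B}
    (hx : x ∈ realCone S) : c • x ∈ realCone S :=
  ⟨smul_ne_zero hc.ne' hx.1, fun ℓ hℓ => by
    rw [map_smul, smul_eq_mul]; exact mul_nonneg hc.le (hx.2 ℓ hℓ)⟩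

lemma add_mem_complexCone (st : Setup B) (u v : B) (huv : ‖u‖ + ‖v‖ < 1) :
    (st.e + u, v) ∈ complexCone st.S := by
  have h1 : ‖u - v‖ < 1 := lt_of_le_of_lt (norm_sub_le u v) huv
  have h2 : ‖u + v‖ < 1 := lt_of_le_of_lt (norm_add_le u v) huv
  refine ⟨1 - Complex.I, by norm_num [Complex.ext_iff],
    (1/2 : ℝ) • (st.e + (u - v)), smul_mem_realCone _ (by norm_num) (add_mem_realCone st _ h1),
    (1/2 : ℝ) • (st.e + (u + v)), smul_mem_realCone _ (by norm_num) (add_mem_realCone st _ h2),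
    ?_⟩
  have hre : (1 - Complex.I).re = 1 := by simp
  have him : (1 - Complex.I).im = -1 := by simp
  unfold cSmul
  rw [Prod.ext_iff]
  constructor <;> · simp only [hre, him]; module

/-- **Lemma 5.14 (𝕖 is interior).** For `h ∈ B_ℂ` and `z ∈ ℂ` with `|z| < (√2 ‖h‖)⁻¹`,
one has `𝕖 + zh ∈ 𝒞_ℂ` and
`δ_𝒞(𝕖, 𝕖 + zh) ≤ ln((1 + |z|√2‖h‖)/(1 − |z|√2‖h‖)) < ∞`. -/
theorem unit_interior {B : Type*} [NormedAddCommGroup B] [NormedSpace ℝ B]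
    [CompleteSpace B] (st : Setup B) :
    ∀ h : B × B, ∀ z : ℂ, ‖z‖ * (Real.sqrt 2 * cNorm h) < 1 →
      (st.e, (0 : B)) + cSmul z h ∈ complexCone st.S ∧
      deltaGauge st.S (st.e, (0 : B)) ((st.e, (0 : B)) + cSmul z h) ≤
        ENNReal.ofReal (Real.log ((1 + ‖z‖ * Real.sqrt 2 * cNorm h) /
          (1 - ‖z‖ * Real.sqrt 2 * cNorm h))) := by
  intro h z hz
  have hcn : 0 ≤ cNorm h := cNorm_nonneg h
  set a : ℝ := ‖z‖ * (Real.sqrt 2 * cNorm h) with ha_def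
  have ha0 : 0 ≤ a := by positivity
  have ha1 : a < 1 := hz
  have hA : ‖z‖ * Real.sqrt 2 * cNorm h = a := by rw [ha_def]; ring
  -- membership for all rescalings
  have key : ∀ w : ℂ, ‖w‖ * a < 1 → (st.e, (0:B)) + cSmul (w * z) h ∈ complexCone st.S := by
    intro w hw
    have h1 := sum_norm_le_rNorm (cSmul (w * z) h)
    have h2 := rNorm_cSmul_le (w * z) h
    have h3 : Real.sqrt 2 * rNorm (cSmul (w * z) h) ≤ ‖w‖ * a := by
      calc Real.sqrt 2 * rNorm (cSmul (w * z) h)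
          ≤ Real.sqrt 2 * (‖w * z‖ * cNorm h) :=
            mul_le_mul_of_nonneg_left h2 (Real.sqrt_nonneg 2)
        _ = ‖w‖ * a := by rw [ha_def, norm_mul]; ring
    have hsum : ‖(cSmul (w * z) h).1‖ + ‖(cSmul (w * z) h).2‖ < 1 := by linarith
    have hm := add_mem_complexCone st (cSmul (w * z) h).1 (cSmul (w * z) h).2 hsum
    have heq : (st.e, (0:B)) + cSmul (w * z) h =
        (st.e + (cSmul (w * z) h).1, (cSmul (w * z) h).2) := by
      rw [Prod.ext_iff]
      exact ⟨rfl, zero_add _⟩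
    rw [heq]
    exact hm
  have hmemg : (st.e, (0:B)) + cSmul z h ∈ complexCone st.S := by
    have := key 1 (by simpa using ha1)
    rwa [one_mul] at this
  have hmeme : (st.e, (0:B)) ∈ complexCone st.S := by
    have h0 := key 0 (by simpa using zero_lt_one)
    have heq : (st.e, (0:B)) + cSmul ((0:ℂ) * z) h = (st.e, (0:B)) := by
      rw [zero_mul]
      rw [Prod.ext_iff]
      constructor <;> simp [cSmul]
    rwa [heq] at h0
  refine ⟨hmemg, ?_⟩
  set g : B × B := (st.e, (0:B)) + cSmul z h with hg_def
  -- bound for each dual functional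
  have hbound : ∀ ℓ ∈ dualComplexCone st.S, (0:ℝ) < ‖ℓ (st.e, (0:B))‖ ∧
      (1 - a) * ‖ℓ (st.e, (0:B))‖ ≤ ‖ℓ g‖ ∧ ‖ℓ g‖ ≤ (1 + a) * ‖ℓ (st.e, (0:B))‖ := by
    intro ℓ hℓ
    obtain ⟨⟨hadd, hhom, _⟩, hnz⟩ := hℓ
    set c : ℂ := ℓ (st.e, (0:B)) with hc_def
    set d : ℂ := ℓ (cSmul z h) with hd_def
    have hc : c ≠ 0 := hnz _ hmeme
    have hcpos : 0 < ‖c‖ := norm_pos_iff.2 hc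
    have hd : ‖d‖ ≤ a * ‖c‖ := by
      apply affine_bound c d a ha0
      intro w hw
      have hm := key w hw
      have := hnz _ hm
      rwa [hadd, cSmul_mul, hhom] at this
    have hgval : ℓ g = c + d := hadd _ _
    constructor
    · exact hcpos
    constructor
    · have hn : ‖c‖ - ‖d‖ ≤ ‖c + d‖ := by
        have := norm_sub_norm_le c (-d)
        simpa [sub_neg_eq_add] using this
      rw [hgval]
      nlinarith
    · rw [hgval]
      have := norm_add_le c d
      nlinarith
  -- gauge set elements bounds
  have hgauge : ∀ ζ ∈ gaugeSet st.S (st.e, (0:B)) g,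
      (0:ℝ) < ‖ζ‖ ∧ ‖ζ‖ ≤ 1 / (1 - a) ∧ 1 / (1 + a) ≤ ‖ζ‖ := by
    rintro ζ ⟨ℓ, hℓ, rfl⟩
    obtain ⟨hcpos, hlow, hup⟩ := hbound ℓ hℓ
    have hgne : ℓ g ≠ 0 := hℓ.2 g hmemg
    have hgpos : 0 < ‖ℓ g‖ := norm_pos_iff.2 hgne
    rw [norm_div]
    have h1a : (0:ℝ) < 1 - a := by linarith
    refine ⟨by positivity, ?_, ?_⟩
    · calc ‖ℓ (st.e, (0:B))‖ / ‖ℓ g‖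
          ≤ ‖ℓ (st.e, (0:B))‖ / ((1 - a) * ‖ℓ (st.e, (0:B))‖) :=
            div_le_div_of_nonneg_left hcpos.le (by positivity) hlow
        _ = 1 / (1 - a) := by
            rw [div_eq_div_iff (by positivity) (by linarith)]
            ring
    · calc 1 / (1 + a)
          = ‖ℓ (st.e, (0:B))‖ / ((1 + a) * ‖ℓ (st.e, (0:B))‖) := by
            rw [div_eq_div_iff (by linarith) (by positivity)]
            ring
        _ ≤ ‖ℓ (st.e, (0:B))‖ / ‖ℓ g‖ := by
            apply div_le_div_of_nonneg_left hcpos.le hgpos hup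
  -- conclude
  rw [hA]
  unfold deltaGauge
  apply iSup₂_le
  intro ζ hζ
  apply iSup₂_le
  intro ω hω
  obtain ⟨hζpos, hζup, hζlow⟩ := hgauge ζ hζ
  obtain ⟨hωpos, hωup, hωlow⟩ := hgauge ω hω
  apply ENNReal.ofReal_le_ofReal
  apply Real.log_le_log (by positivity)
  have h1a : (0:ℝ) < 1 - a := by linarith
  have h1a' : (0:ℝ) < 1 + a := by linarith
  calc ‖ζ‖ / ‖ω‖ ≤ (1 / (1 - a)) / (1 / (1 + a)) :=
        div_le_div₀ (by positivity) hζup (by positivity) hωlow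
    _ = (1 + a) / (1 - a) := by
        field_simp

end ConeSetup
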